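/- Under the stick-breaking construction with i.i.d. Beta(1,α) variables and a Hilbert space family (v_i) with ‖v_i‖² ≤ R, the expected squared truncation error satisfies E[‖∑_{i=1}^∞ π_i v_i − ∑_{i=1}^T π_i v_i‖²] ≤ R · (α/(1+α))^T. -/

import Mathlib

open MeasureTheory ProbabilityTheory

/-- The Beta(1, α) distribution on ℝ, with density `α (1-x)^(α-1)` on `[0,1]`. -/
noncomputable def betaOneMeasure (α : ℝ) : Measure ℝ :=
  volume.withDensity
    (fun x => ENNReal.ofReal (if x ∈ Set.Icc (0:ℝ) 1 then α * (1 - x) ^ (α - 1) else 0))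

lemma betaOne_compl (α : ℝ) : betaOneMeasure α (Set.Icc (0:ℝ) 1)ᶜ = 0 := by
  rw [betaOneMeasure, withDensity_apply _ measurableSet_Icc.compl]
  rw [setLIntegral_congr_fun measurableSet_Icc.compl
    ((fun x hx => by
      simp only [Set.mem_compl_iff] at hx
      rw [if_neg hx, ENNReal.ofReal_zero]))]
  simp

lemma betaOne_integral (α : ℝ) (hα : 0 < α) :
    ∫ x, (1 - x) ∂(betaOneMeasure α) = α / (1 + α) := by
  set d : ℝ → ℝ := fun x => if x ∈ Set.Icc (0:ℝ) 1 then α * (1 - x) ^ (α - 1) else 0 with hd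
  have hd_nonneg : ∀ x, 0 ≤ d x := by
    intro x
    simp only [hd]
    split
    · next h => exact mul_nonneg hα.le (Real.rpow_nonneg (by linarith [h.2]) _)
    · exact le_rfl
  have hd_meas : Measurable d := by
    apply Measurable.ite measurableSet_Icc _ measurable_const
    fun_prop
  have h1 : betaOneMeasure α = volume.withDensity (fun x => ((d x).toNNReal : ENNReal)) := rfl
  rw [h1, integral_withDensity_eq_integral_smul hd_meas.real_toNNReal]
  have h2 : ∀ x : ℝ, (d x).toNNReal • (1 - x)
      = Set.indicator (Set.Icc (0:ℝ) 1) (fun x => α * (1 - x) ^ α) x := by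
    intro x
    rw [NNReal.smul_def, smul_eq_mul, Real.coe_toNNReal _ (hd_nonneg x)]
    by_cases hx : x ∈ Set.Icc (0:ℝ) 1
    · rw [Set.indicator_of_mem hx]
      simp only [hd, if_pos hx]
      rcases eq_or_lt_of_le hx.2 with h1 | h1
      · rw [h1]; simp [Real.zero_rpow hα.ne']
      · have hpos : 0 < 1 - x := by linarith
        rw [mul_assoc]
        congr 1
        nth_rewrite 2 [show (1:ℝ) - x = (1-x) ^ (1:ℝ) by rw [Real.rpow_one]]
        rw [← Real.rpow_add hpos]
        congr 1
        ring
    · rw [Set.indicator_of_notMem hx]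
      simp only [hd, if_neg hx, zero_mul]
  rw [integral_congr_ae (ae_of_all _ h2)]
  rw [integral_indicator measurableSet_Icc]
  rw [integral_Icc_eq_integral_Ioc]
  rw [← intervalIntegral.integral_of_le (by norm_num : (0:ℝ) ≤ 1)]
  rw [intervalIntegral.integral_const_mul]
  rw [intervalIntegral.integral_comp_sub_left (fun x => x ^ α) 1]
  simp only [sub_self, sub_zero]
  rw [integral_rpow (Or.inl (by linarith))]
  rw [Real.one_rpow, Real.zero_rpow (by positivity)]
  rw [show (1:ℝ) - 0 = 1 by norm_num, mul_one_div, add_comm α 1]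

lemma stick_tail_bound {H : Type*} [NormedAddCommGroup H] [InnerProductSpace ℝ H]
    [CompleteSpace H] (b : ℕ → ℝ) (hb : ∀ k, b k ∈ Set.Icc (0:ℝ) 1)
    (R : ℝ) (hR : 0 ≤ R) (v : ℕ → H) (hv : ∀ i, ‖v i‖ ^ 2 ≤ R) (T : ℕ) :
    ‖(∑' i, (b i * ∏ k ∈ Finset.range i, (1 - b k)) • v i)
      - ∑ i ∈ Finset.range T, (b i * ∏ k ∈ Finset.range i, (1 - b k)) • v i‖ ^ 2
      ≤ R * ∏ k ∈ Finset.range T, (1 - b k) := by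
  set p : ℕ → ℝ := fun i => b i * ∏ k ∈ Finset.range i, (1 - b k) with hp
  set Q : ℕ → ℝ := fun n => ∏ k ∈ Finset.range n, (1 - b k) with hQ
  have hQ01 : ∀ n, 0 ≤ Q n ∧ Q n ≤ 1 := by
    intro n
    refine ⟨Finset.prod_nonneg (fun k _ => by linarith [(hb k).2]),
      Finset.prod_le_one (fun k _ => by linarith [(hb k).2]) (fun k _ => by linarith [(hb k).1])⟩
  have hp_eq : ∀ i, p i = Q i - Q (i + 1) := by
    intro i
    simp only [hp, hQ, Finset.prod_range_succ]
    ring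
  have hp_nonneg : ∀ i, 0 ≤ p i := fun i => mul_nonneg (hb i).1 (hQ01 i).1
  have hsum_eq : ∀ n, ∑ i ∈ Finset.range n, p i = 1 - Q n := by
    intro n
    rw [Finset.sum_congr rfl (fun i _ => hp_eq i), Finset.sum_range_sub']
    simp [hQ]
  have hsum_le : ∀ n, ∑ i ∈ Finset.range n, p i ≤ 1 := by
    intro n; rw [hsum_eq]; linarith [(hQ01 n).1]
  have hp_summable : Summable p := summable_of_sum_range_le hp_nonneg hsum_le
  have hvR : ∀ i, ‖v i‖ ≤ Real.sqrt R :=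
    fun i => (Real.le_sqrt (norm_nonneg _) hR).2 (hv i)
  have hnorm_le : ∀ i, ‖p i • v i‖ ≤ p i * Real.sqrt R := by
    intro i
    rw [norm_smul, Real.norm_eq_abs, abs_of_nonneg (hp_nonneg i)]
    exact mul_le_mul_of_nonneg_left (hvR i) (hp_nonneg i)
  have hf_summable : Summable (fun i => p i • v i) :=
    Summable.of_norm_bounded (hp_summable.mul_right _) hnorm_le
  have htail : (∑' i, p i • v i) - ∑ i ∈ Finset.range T, p i • v i
      = ∑' i, p (i + T) • v (i + T) := by
    rw [← Summable.sum_add_tsum_nat_add T hf_summable]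
    ring_nf
    abel
  have htail_sum : ∀ n, ∑ i ∈ Finset.range n, p (i + T) = Q T - Q (T + n) := by
    intro n
    have := hsum_eq (T + n)
    rw [Finset.sum_range_add] at this
    have h2 := hsum_eq T
    have h3 : ∀ i, p (T + i) = p (i + T) := fun i => by rw [add_comm]
    simp only [h3] at this
    linarith
  have hptail_summable : Summable (fun i => p (i + T)) := by
    exact (summable_nat_add_iff T).2 hp_summable
  have hnorm_tail_summable : Summable (fun i => ‖p (i + T) • v (i + T)‖) :=
    Summable.of_nonneg_of_le (fun i => norm_nonneg _) (fun i => hnorm_le _)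
      (hptail_summable.mul_right _)
  have htail_tsum_le : ∑' i, p (i + T) ≤ Q T := by
    apply Summable.tsum_le_of_sum_range_le hptail_summable
    intro n
    rw [htail_sum]
    linarith [(hQ01 (T + n)).1]
  have hQT := hQ01 T
  have hbound : ‖(∑' i, p i • v i) - ∑ i ∈ Finset.range T, p i • v i‖ ≤ Real.sqrt R * Q T := by
    rw [htail]
    calc ‖∑' i, p (i + T) • v (i + T)‖ ≤ ∑' i, ‖p (i + T) • v (i + T)‖ :=
          norm_tsum_le_tsum_norm hnorm_tail_summable
      _ ≤ ∑' i, p (i + T) * Real.sqrt R := by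
          apply Summable.tsum_le_tsum (fun i => hnorm_le _) hnorm_tail_summable
            (hptail_summable.mul_right _)
      _ = (∑' i, p (i + T)) * Real.sqrt R := by rw [tsum_mul_right]
      _ ≤ Q T * Real.sqrt R :=
          mul_le_mul_of_nonneg_right htail_tsum_le (Real.sqrt_nonneg R)
      _ = Real.sqrt R * Q T := mul_comm _ _
  have h0 : 0 ≤ ‖(∑' i, p i • v i) - ∑ i ∈ Finset.range T, p i • v i‖ := norm_nonneg _
  calc ‖(∑' i, p i • v i) - ∑ i ∈ Finset.range T, p i • v i‖ ^ 2
      ≤ (Real.sqrt R * Q T) ^ 2 := by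
        apply pow_le_pow_left₀ h0 hbound
    _ = R * Q T ^ 2 := by rw [mul_pow, Real.sq_sqrt hR]
    _ ≤ R * Q T := mul_le_mul_of_nonneg_left (by nlinarith [hQT.1, hQT.2]) hR

lemma prod_one_sub_integral {Ω : Type*} [MeasurableSpace Ω]
    (μ : Measure Ω) [IsProbabilityMeasure μ] (α : ℝ) (hα : 0 < α)
    (β : ℕ → Ω → ℝ) (hmeas : ∀ i, Measurable (β i))
    (hindep : iIndepFun (m := fun _ => Real.measurableSpace) β μ)
    (hdist : ∀ i, Measure.map (β i) μ = betaOneMeasure α) (T : ℕ) :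
    ∫ ω, ∏ k ∈ Finset.range T, (1 - β k ω) ∂μ = (α / (1 + α)) ^ T := by
  set G : ℕ → Ω → ℝ := fun k ω => 1 - β k ω with hG
  have hGmeas : ∀ k, Measurable (G k) := fun k => measurable_const.sub (hmeas k)
  have hGindep : iIndepFun (m := fun _ => Real.measurableSpace) G μ :=
    hindep.comp (fun _ => fun x => (1:ℝ) - x) (fun _ => measurable_const.sub measurable_id)
  have hGint : ∀ k, ∫ ω, G k ω ∂μ = α / (1 + α) := by
    intro k
    have : ∫ ω, G k ω ∂μ = ∫ x, (1 - x) ∂(Measure.map (β k) μ) := by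
      rw [integral_map (hmeas k).aemeasurable]
      exact (measurable_const.sub measurable_id).aestronglyMeasurable
    rw [this, hdist k, betaOne_integral α hα]
  induction T with
  | zero => simp
  | succ n ih =>
    have hprod : (fun ω => ∏ k ∈ Finset.range (n+1), (1 - β k ω))
        = (∏ k ∈ Finset.range n, G k) * G n := by
      funext ω
      simp only [Finset.prod_apply, Pi.mul_apply, Finset.prod_range_succ, hG]
    rw [show ∫ ω, ∏ k ∈ Finset.range (n+1), (1 - β k ω) ∂μ
        = ∫ ω, ((∏ k ∈ Finset.range n, G k) * G n) ω ∂μ by rw [hprod]]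
    have hindep2 : IndepFun (∏ j ∈ Finset.range n, G j) (G n) μ :=
      hGindep.indepFun_prod_range_succ hGmeas n
    rw [IndepFun.integral_mul_eq_mul_integral hindep2 _ (hGmeas n).aestronglyMeasurable]
    · have : ∫ ω, (∏ j ∈ Finset.range n, G j) ω ∂μ = (α / (1+α)) ^ n := by
        rw [← ih]
        congr 1
        funext ω
        simp [Finset.prod_apply, hG]
      rw [show integral μ (∏ j ∈ Finset.range n, G j) = (α/(1+α))^n from this,
        show integral μ (G n) = α/(1+α) from hGint n, pow_succ]
    · have : Measurable (∏ j ∈ Finset.range n, G j) := by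
        rw [show (∏ j ∈ Finset.range n, G j) = fun ω => ∏ j ∈ Finset.range n, G j ω from
          funext (fun ω => Finset.prod_apply ω _ _)]
        exact Finset.measurable_prod (Finset.range n) (fun i _ => hGmeas i)
      exact this.aestronglyMeasurable

/-- Expected squared truncation error of the stick-breaking mixture embedding:
`E[‖∑_{i=1}^∞ π_i v_i − ∑_{i=1}^T π_i v_i‖²] ≤ R (α/(1+α))^T`. -/
theorem expected_truncation_error {Ω : Type*} [MeasurableSpace Ω]
    (μ : Measure Ω) [IsProbabilityMeasure μ] (α : ℝ) (hα : 0 < α)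
    (β : ℕ → Ω → ℝ) (hmeas : ∀ i, Measurable (β i))
    (hindep : iIndepFun (m := fun _ => Real.measurableSpace) β μ)
    (hdist : ∀ i, Measure.map (β i) μ = betaOneMeasure α)
    (π : ℕ → Ω → ℝ)
    (hπ : ∀ i ω, π i ω = β i ω * ∏ k ∈ Finset.range i, (1 - β k ω))
    {H : Type*} [NormedAddCommGroup H] [InnerProductSpace ℝ H] [CompleteSpace H]
    (R : ℝ) (hR : 0 ≤ R) (v : ℕ → H) (hv : ∀ i, ‖v i‖ ^ 2 ≤ R) (T : ℕ) :
    ∫ ω, ‖(∑' i, π i ω • v i) - ∑ i ∈ Finset.range T, π i ω • v i‖ ^ 2 ∂μ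
      ≤ R * (α / (1 + α)) ^ T := by
  set f : Ω → ℝ := fun ω => ‖(∑' i, π i ω • v i) - ∑ i ∈ Finset.range T, π i ω • v i‖ ^ 2
    with hf
  set g : Ω → ℝ := fun ω => R * ∏ k ∈ Finset.range T, (1 - β k ω) with hg
  -- a.e. every β i ω is in [0,1]
  have hae : ∀ᵐ ω ∂μ, ∀ i, β i ω ∈ Set.Icc (0:ℝ) 1 := by
    rw [ae_all_iff]
    intro i
    have h1 : μ {ω | β i ω ∉ Set.Icc (0:ℝ) 1} = 0 := by
      have : {ω | β i ω ∉ Set.Icc (0:ℝ) 1} = β i ⁻¹' (Set.Icc (0:ℝ) 1)ᶜ := rfl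
      rw [this, ← Measure.map_apply (hmeas i) measurableSet_Icc.compl, hdist i, betaOne_compl]
    exact h1
  -- pointwise bound on the good set
  have hle : ∀ᵐ ω ∂μ, f ω ≤ g ω := by
    filter_upwards [hae] with ω hω
    have := stick_tail_bound (fun k => β k ω) hω R hR v hv T
    simp only [hf, hg]
    have heq : ∀ i : ℕ, π i ω • v i = (β i ω * ∏ k ∈ Finset.range i, (1 - β k ω)) • v i :=
      fun i => by rw [hπ]
    simp only [hf, hg, heq]
    exact this
  -- g bounds
  have hgbound : ∀ᵐ ω ∂μ, ‖g ω‖ ≤ R := by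
    filter_upwards [hae] with ω hω
    have h1 : 0 ≤ ∏ k ∈ Finset.range T, (1 - β k ω) :=
      Finset.prod_nonneg (fun k _ => by linarith [(hω k).2])
    have h2 : ∏ k ∈ Finset.range T, (1 - β k ω) ≤ 1 :=
      Finset.prod_le_one (fun k _ => by linarith [(hω k).2]) (fun k _ => by linarith [(hω k).1])
    simp only [hg, Real.norm_eq_abs, abs_of_nonneg (mul_nonneg hR h1)]
    nlinarith
  have hg_meas : Measurable g :=
    (Finset.measurable_prod (Finset.range T)
      (fun i _ => measurable_const.sub (hmeas i))).const_mul R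
  have hg_int : Integrable g μ :=
    Integrable.mono' (integrable_const R) hg_meas.aestronglyMeasurable hgbound
  have hRHS : ∫ ω, g ω ∂μ = R * (α / (1 + α)) ^ T := by
    rw [hg]
    rw [integral_const_mul]
    rw [prod_one_sub_integral μ α hα β hmeas hindep hdist T]
  by_cases hint : Integrable f μ
  · calc ∫ ω, f ω ∂μ ≤ ∫ ω, g ω ∂μ := integral_mono_ae hint hg_int hle
      _ = R * (α / (1 + α)) ^ T := hRHS
  · rw [integral_undef hint]
    positivity
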